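/- Let a, b, c be nonzero integers with gcd(a, b, c) = 1 and m := gcd(a, c) ≥ 3. Consider the equation E : a·x + b·y + c·z = 0 over ℤ_m. Every solution (x, y, z) ∈ ℤ_m³ has y = 0, so |T_E(ℤ_m)| = m², and the coloring f : ℤ_m → {−1, 1} with f(0) = −1 and f(t) = 1 for t ≠ 0 has exactly one monochromatic solution, namely (0, 0, 0). Hence μ_E(ℤ_m) ≤ 1/m² ≤ 1/9. -/

import Mathlib

open Finset

/-- The set of solutions `(x, y, z) ∈ ℤ_m³` to `a·x + b·y + c·z ≡ 0 (mod m)`. -/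
def solnsZ (a b c : ℤ) (m : ℕ) [NeZero m] : Finset (ZMod m × ZMod m × ZMod m) :=
  Finset.univ.filter fun p =>
    (a : ZMod m) * p.1 + (b : ZMod m) * p.2.1 + (c : ZMod m) * p.2.2 = 0

/-- The set of solutions over `ℤ_m` that are monochromatic under the coloring `f`. -/
def monoZ (a b c : ℤ) (m : ℕ) [NeZero m] (f : ZMod m → ℤ) :
    Finset (ZMod m × ZMod m × ZMod m) :=
  (solnsZ a b c m).filter fun p => f p.1 = f p.2.1 ∧ f p.1 = f p.2.2

/-- Let `a, b, c` be nonzero integers with `gcd(a, b, c) = 1` and `m := gcd(a, c) ≥ 3`.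
For `E : a·x + b·y + c·z = 0` over `ℤ_m`: every solution has `y = 0`, so there are
exactly `m²` solutions; the coloring `f` with `f(0) = −1` and `f(t) = 1` otherwise has
`(0,0,0)` as its only monochromatic solution; hence `μ_E(ℤ_m) ≤ 1/m² ≤ 1/9`. -/
theorem high_gcd_coloring (a b c : ℤ) (ha : a ≠ 0) (hb : b ≠ 0) (hc : c ≠ 0)
    (hgcd : Int.gcd a (Int.gcd b c) = 1) (m : ℕ) [NeZero m]
    (hm : m = Int.gcd a c) (hm3 : 3 ≤ m) :
    (∀ p ∈ solnsZ a b c m, p.2.1 = 0) ∧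
    (solnsZ a b c m).card = m ^ 2 ∧
    monoZ a b c m (fun t => if t = 0 then -1 else 1) = {(0, 0, 0)} ∧
    ((monoZ a b c m (fun t => if t = 0 then -1 else 1)).card : ℝ) /
      ((solnsZ a b c m).card : ℝ) ≤ 1 / (m : ℝ) ^ 2 ∧
    (1 : ℝ) / (m : ℝ) ^ 2 ≤ 1 / 9 := by
  -- m divides a and c
  have hma : (m : ℤ) ∣ a := by rw [hm]; exact Int.gcd_dvd_left _ _
  have hmc : (m : ℤ) ∣ c := by rw [hm]; exact Int.gcd_dvd_right _ _
  have ha0 : (a : ZMod m) = 0 := (ZMod.intCast_zmod_eq_zero_iff_dvd a m).mpr hma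
  have hc0 : (c : ZMod m) = 0 := (ZMod.intCast_zmod_eq_zero_iff_dvd c m).mpr hmc
  -- b is coprime to m
  have hcop : Int.gcd b (m : ℤ) = 1 := by
    have hd : (Int.gcd b (m : ℤ) : ℤ) ∣ Int.gcd a (Int.gcd b c) := by
      apply Int.dvd_coe_gcd
      · exact dvd_trans (Int.gcd_dvd_right _ _) hma
      · exact Int.dvd_coe_gcd (Int.gcd_dvd_left _ _)
          (dvd_trans (Int.gcd_dvd_right _ _) hmc)
    rw [hgcd] at hd
    exact_mod_cast Int.eq_one_of_dvd_one (by positivity) hd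
  have hbu : IsUnit (b : ZMod m) := by
    obtain ⟨u, v, huv⟩ := Int.isCoprime_iff_gcd_eq_one.mpr hcop
    have : (u : ZMod m) * (b : ZMod m) = 1 := by
      have := congrArg (fun t : ℤ => (t : ZMod m)) huv
      push_cast at this
      simpa [ZMod.natCast_self] using this
    exact IsUnit.of_mul_eq_one _ (mul_comm (u : ZMod m) (b : ZMod m) ▸ this)
  have hy : ∀ y : ZMod m, (b : ZMod m) * y = 0 ↔ y = 0 := fun y =>
    hbu.mul_right_eq_zero
  have hset : solnsZ a b c m = Finset.univ ×ˢ ({0} ×ˢ Finset.univ) := by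
    ext ⟨x, y, z⟩
    simp [solnsZ, ha0, hc0, hy y, eq_comm]
  have hy0 : ∀ p ∈ solnsZ a b c m, p.2.1 = 0 := by
    intro p hp
    simp only [solnsZ, Finset.mem_filter, Finset.mem_univ, true_and, ha0, hc0,
      zero_mul, zero_add, add_zero, hy] at hp
    exact hp
  have hcard : (solnsZ a b c m).card = m ^ 2 := by
    rw [hset]
    simp [Finset.card_univ, ZMod.card]
    ring
  have hmono : monoZ a b c m (fun t => if t = 0 then -1 else 1) = {(0, 0, 0)} := by
    ext ⟨x, y, z⟩
    simp only [monoZ, solnsZ, Finset.mem_filter, Finset.mem_univ, true_and, ha0, hc0,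
      zero_mul, zero_add, add_zero, hy, Finset.mem_singleton, Prod.mk.injEq]
    constructor
    · rintro ⟨rfl, h1, h2⟩
      simp only [if_pos rfl] at h1 h2
      split_ifs at h1 h2 with hx hz <;> first | (exact ⟨hx, rfl, hz⟩) | omega
    · rintro ⟨rfl, rfl, rfl⟩
      simp
  refine ⟨hy0, hcard, hmono, ?_, ?_⟩
  · rw [hmono, hcard]
    simp
  · have : (9 : ℝ) ≤ (m : ℝ) ^ 2 := by
      have : (3 : ℝ) ≤ (m : ℝ) := by exact_mod_cast hm3
      nlinarith
    have h9 : (0:ℝ) < 9 := by norm_num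
    exact one_div_le_one_div_of_le h9 this
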